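/- arXiv:1808.03589 — 7 statements merged into one kernel-verified Lean document; each statement's English description precedes it below -/
import Mathlib

section
/- Let R be a commutative integral domain over a field k, σ a k-algebra automorphism of R with σ ≠ id, and δ a σ-derivation of R. Then there exists a unique element κ in the fraction field Frac(R) such that δ(h) = κ·(σ(h) − h) for all h ∈ R, where σ and δ are viewed inside Frac(R) via the canonical embedding. -/
/-- If `σ ≠ id` is an automorphism of a domain `R` and `δ` a σ-derivation,
there is a unique `κ` in the fraction field with `δ(h) = κ(σ(h) − h)` for all `h ∈ R`. -/
theorem sigmaDerivation_exists_unique_kappa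
    (k : Type*) [Field k] (R : Type*) [CommRing R] [IsDomain R] [Algebra k R]
    (σ : R ≃ₐ[k] R) (hσ : σ ≠ AlgEquiv.refl)
    (δ : R →ₗ[k] R)
    (hLeib : ∀ f g : R, δ (f * g) = δ f * g + σ f * δ g) :
    ∃! κ : FractionRing R, ∀ h : R,
      algebraMap R (FractionRing R) (δ h) =
        κ * (algebraMap R (FractionRing R) (σ h) - algebraMap R (FractionRing R) h) := by
  obtain ⟨g, hg⟩ : ∃ g : R, σ g ≠ g := by
    by_contra h
    push_neg at h
    exact hσ (AlgEquiv.ext fun x => h x)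
  set φ := algebraMap R (FractionRing R) with hφ
  have hinj : Function.Injective φ := IsFractionRing.injective R (FractionRing R)
  have hden : φ (σ g) - φ g ≠ 0 := by
    intro h
    exact hg (hinj (by rwa [sub_eq_zero] at h))
  have key : ∀ h : R, δ h * (σ g - g) = δ g * (σ h - h) := by
    intro h
    have h1 := hLeib g h
    have h2 := hLeib h g
    rw [mul_comm g h, h2] at h1
    linear_combination -h1
  refine ⟨φ (δ g) / (φ (σ g) - φ g), fun h => ?_, fun κ' hκ' => ?_⟩
  · rw [div_mul_eq_mul_div, eq_div_iff hden]
    have := congrArg φ (key h)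
    push_cast [map_mul, map_sub] at this ⊢
    linear_combination this
  · have := hκ' g
    field_simp [hden] at this ⊢
    rw [this]
end

section
/- Let R be a commutative integral domain, σ an automorphism of R with σ ≠ id, and δ a σ-derivation. If there exists f ∈ R with σ(f) ≠ f and δ(f) = 0, then δ = 0. -/
/-- If a σ-derivation δ on a domain vanishes on some `f` with `σ(f) ≠ f`,
then `δ = 0`. -/
theorem sigmaDerivation_eq_zero_of_vanish
    (k : Type*) [Field k] (R : Type*) [CommRing R] [IsDomain R] [Algebra k R]
    (σ : R ≃ₐ[k] R) (hσ : σ ≠ AlgEquiv.refl)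
    (δ : R →ₗ[k] R)
    (hLeib : ∀ f g : R, δ (f * g) = δ f * g + σ f * δ g)
    (f : R) (hf : σ f ≠ f) (hδf : δ f = 0) :
    δ = 0 := by
  ext g
  have h1 := hLeib f g
  have h2 := hLeib g f
  rw [mul_comm g f] at h2
  rw [h1, hδf, zero_mul, zero_add, mul_zero, add_zero] at h2
  have : (σ f - f) * δ g = 0 := by rw [sub_mul, h2, mul_comm]; ring
  rcases mul_eq_zero.mp this with h | h
  · exact absurd (sub_eq_zero.mp h) hf
  · simpa using h
end

section
/- Let K be a commutative field, σ an automorphism of K, κ ∈ K, δ(c) = κ(σ(c) − c), and E = K[x; σ, δ] the Ore extension. Then for all natural numbers r, (x + κ)^r = Σ_{i=0}^{r} e_{r−i}(κ, σ(κ), ..., σ^{r−1}(κ)) · x^i in E, where e_j denotes the elementary symmetric polynomial of degree j in r variables (with e_0 = 1). -/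
lemma my_esymm_zero {R : Type*} [CommSemiring R] (s : Multiset R) : s.esymm 0 = 1 := by
  simp [Multiset.esymm, Multiset.powersetCard_zero_left]

lemma my_esymm_map_hom {R S : Type*} [CommSemiring R] [CommSemiring S] (f : R →+* S)
    (s : Multiset R) (n : ℕ) : (s.map f).esymm n = f (s.esymm n) := by
  rw [Multiset.esymm, Multiset.powersetCard_map, Multiset.map_map]
  have h : (Multiset.prod ∘ Multiset.map ⇑f) = (⇑f ∘ Multiset.prod) := by
    funext t; exact (map_multiset_prod f t).symm
  rw [h, ← Multiset.map_map, ← map_multiset_sum, Multiset.esymm]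

lemma my_esymm_cons {R : Type*} [CommSemiring R] (a : R) (s : Multiset R) (n : ℕ) :
    (a ::ₘ s).esymm (n + 1) = s.esymm (n + 1) + a * s.esymm n := by
  rw [Multiset.esymm, Multiset.powersetCard_cons, Multiset.map_add, Multiset.sum_add,
    Multiset.map_map]
  congr 1
  rw [Multiset.esymm, ← Multiset.sum_map_mul_left]
  congr 1
  apply Multiset.map_congr rfl
  intro t _
  simp

lemma my_esymm_eq_zero {R : Type*} [CommSemiring R] (s : Multiset R) (n : ℕ)
    (h : Multiset.card s < n) : s.esymm n = 0 := by
  rw [Multiset.esymm, Multiset.powersetCard_eq_empty _ h]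
  simp

lemma my_range_succ' (n : ℕ) :
    Multiset.range (n + 1) = 0 ::ₘ (Multiset.range n).map (· + 1) := by
  rw [Multiset.range, List.range_succ_eq_map, Multiset.range]
  simp only [← Multiset.cons_coe, Multiset.map_coe]

/-- In `E = K[x; σ, δ]` with `δ(c) = κ(σ(c) − c)`, the power `(x + κ)^r`
equals `Σ_{i=0}^{r} e_{r−i}(κ, σ(κ), …, σ^{r−1}(κ)) x^i`, where `e_j` is the
elementary symmetric polynomial of degree `j`. -/
theorem ore_x_add_kappa_pow
    (K : Type*) [Field K] (σ : K ≃+* K) (κ : K)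
    (δ : K → K) (hδ : ∀ c : K, δ c = κ * (σ c - c))
    (E : Type*) [Ring E] (ι : K →+* E) (x : E)
    (hrel : ∀ c : K, x * ι c = ι (σ c) * x + ι (δ c)) :
    ∀ r : ℕ, (x + ι κ) ^ r =
      ∑ i ∈ Finset.range (r + 1),
        ι (((Multiset.range r).map (fun j => (⇑σ)^[j] κ)).esymm (r - i)) * x ^ i := by
  -- key commutation relation
  have hcomm : ∀ a : K, (x + ι κ) * ι a = ι (σ a) * (x + ι κ) := by
    intro a
    rw [add_mul, hrel, hδ, mul_add, add_assoc, ← map_mul, ← map_add, ← map_mul]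
    congr 2
    ring
  intro r
  induction r with
  | zero => simp [my_esymm_zero]
  | succ r ih =>
    set S : Multiset K := (Multiset.range r).map (fun j => (⇑σ)^[j] κ) with hSdef
    -- the multiset for r+1 is κ cons σ applied to S
    have hS' : (Multiset.range (r + 1)).map (fun j => (⇑σ)^[j] κ) = κ ::ₘ S.map ⇑σ := by
      rw [my_range_succ', Multiset.map_cons, hSdef, Multiset.map_map, Multiset.map_map]
      congr 1
      refine Multiset.map_congr rfl fun j _ => ?_
      simp [Function.comp, Function.iterate_succ_apply']
    have ht : ∀ j : ℕ, (S.map ⇑σ).esymm j = σ (S.esymm j) := by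
      intro j
      exact my_esymm_map_hom (σ : K →+* K) S j
    have hcard : Multiset.card S = r := by simp [hSdef]
    have htop : (S.map ⇑σ).esymm (r + 1) = 0 := by
      rw [ht, my_esymm_eq_zero S (r + 1) (by omega), map_zero]
    -- compute the product
    rw [pow_succ', ih, Finset.mul_sum]
    have hterm : ∀ i : ℕ,
        (x + ι κ) * (ι (S.esymm (r - i)) * x ^ i) =
          ι ((S.map ⇑σ).esymm (r - i)) * x ^ (i + 1)
            + ι (κ * (S.map ⇑σ).esymm (r - i)) * x ^ i := by
      intro i
      rw [← mul_assoc, hcomm, ht, mul_assoc, add_mul, mul_add, pow_succ', map_mul]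
      congr 1
      rw [← mul_assoc, ← map_mul, mul_comm (σ (S.esymm (r - i))) κ, map_mul, mul_assoc]
    rw [Finset.sum_congr rfl (fun i _ => hterm i), Finset.sum_add_distrib]
    -- first sum re-indexed over range (r+2)
    have h1 : (∑ i ∈ Finset.range (r + 1 + 1), ι ((S.map ⇑σ).esymm (r + 1 - i)) * x ^ i)
        = (∑ i ∈ Finset.range (r + 1), ι ((S.map ⇑σ).esymm (r - i)) * x ^ (i + 1)) := by
      rw [Finset.sum_range_succ']
      simp [htop]
    rw [← h1, hS']
    have hL : (∑ i ∈ Finset.range (r + 1 + 1), ι ((S.map ⇑σ).esymm (r + 1 - i)) * x ^ i)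
        = (∑ i ∈ Finset.range (r + 1), ι ((S.map ⇑σ).esymm (r + 1 - i)) * x ^ i)
          + x ^ (r + 1) := by
      rw [Finset.sum_range_succ]
      simp [my_esymm_zero]
    have hR : (∑ i ∈ Finset.range (r + 1 + 1), ι ((κ ::ₘ S.map ⇑σ).esymm (r + 1 - i)) * x ^ i)
        = (∑ i ∈ Finset.range (r + 1), ι ((κ ::ₘ S.map ⇑σ).esymm (r + 1 - i)) * x ^ i)
          + x ^ (r + 1) := by
      rw [Finset.sum_range_succ]
      simp [my_esymm_zero]
    rw [hL, hR, add_right_comm]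
    congr 1
    rw [← Finset.sum_add_distrib]
    apply Finset.sum_congr rfl
    intro i hi
    have hi' : i < r + 1 := Finset.mem_range.mp hi
    have hsub : r + 1 - i = (r - i) + 1 := by omega
    rw [hsub, my_esymm_cons, map_add, add_mul]
end

section
/- Let A = ⊕_{i∈ℕ} A_i be an ℕ-graded k-algebra and τ a graded k-algebra automorphism of A. Define a new multiplication on A by a ∗ b = a · τ^{deg a}(b) for homogeneous a, b, extended bilinearly. Then ∗ is associative, has unit 1, and preserves the grading, so (A, ∗) is again an ℕ-graded k-algebra (the Zhang twist tw(A, τ)). -/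
/-- Zhang twist: for an ℕ-graded algebra `A` with grading `𝒜` and a graded
automorphism `τ`, the twisted multiplication `a ∗ b = a · τ^{deg a}(b)` on homogeneous
elements is associative, unital, and preserves the grading. -/
theorem zhang_twist_graded_algebra
    (k : Type*) [Field k] (A : Type*) [Ring A] [Algebra k A]
    (𝒜 : ℕ → Submodule k A) [GradedAlgebra 𝒜]
    (τ : A ≃ₐ[k] A) (hτ : ∀ (i : ℕ) (a : A), a ∈ 𝒜 i → τ a ∈ 𝒜 i) :
    ∀ (i j l : ℕ) (a b c : A), a ∈ 𝒜 i → b ∈ 𝒜 j → c ∈ 𝒜 l →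
      (a * (⇑τ)^[i] b ∈ 𝒜 (i + j)) ∧
      ((a * (⇑τ)^[i] b) * (⇑τ)^[i + j] c = a * (⇑τ)^[i] (b * (⇑τ)^[j] c)) ∧
      ((1 : A) * (⇑τ)^[0] a = a) ∧
      (a * (⇑τ)^[i] (1 : A) = a) := by
  have hiter : ∀ (n i : ℕ) (a : A), a ∈ 𝒜 i → (⇑τ)^[n] a ∈ 𝒜 i := by
    intro n
    induction n with
    | zero => intro i a ha; simpa using ha
    | succ n ih =>
      intro i a ha
      rw [Function.iterate_succ_apply']
      exact hτ i _ (ih i a ha)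
  have hone : ∀ n : ℕ, (⇑τ)^[n] (1 : A) = 1 := by
    intro n
    induction n with
    | zero => rfl
    | succ n ih => rw [Function.iterate_succ_apply', ih, map_one]
  have hmul : ∀ (n : ℕ) (x y : A), (⇑τ)^[n] (x * y) = (⇑τ)^[n] x * (⇑τ)^[n] y := by
    intro n
    induction n with
    | zero => intro x y; rfl
    | succ n ih =>
      intro x y
      rw [Function.iterate_succ_apply', Function.iterate_succ_apply',
        Function.iterate_succ_apply', ih, map_mul]
  intro i j l a b c ha hb _
  refine ⟨SetLike.mul_mem_graded ha (hiter i j b hb), ?_, by simp, by rw [hone, mul_one]⟩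
  rw [hmul, ← Function.iterate_add_apply, mul_assoc]
end

section
/- Let E = R[x; σ, δ] be an Ore extension over a commutative integral domain R with σ ≠ id of finite order m, J ∈ k^× with J^m = 1, κ ∈ Frac(R) with δ(h) = κ(σ(h) − h) for all h, and let ν be the k-algebra automorphism of E with ν|_R = σ^{-1} and ν(x) = Jx + Jκ − σ_q^{-1}(κ) (assuming Jκ − σ_q^{-1}(κ) ∈ R, where σ_q extends σ to Frac(R)). Then ν has the same order as σ. -/
/-- Auxiliary sequence `β` with `β 0 = 0`, `β (n+1) = Jⁿ • b + τ (β n)`. -/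
private def betaSeq {k R : Type*} [Field k] [CommRing R] [Algebra k R]
    (τ : R ≃ₐ[k] R) (J : k) (b : R) : ℕ → R
  | 0 => 0
  | n + 1 => J ^ n • b + τ (betaSeq τ J b n)

/-- The Nakayama automorphism `ν` of `E = R[x; σ, δ]` (with `σ ≠ id` of
finite order `m`, `ν|_R = σ⁻¹`, `ν(x) = Jx + Jκ − σ_q⁻¹(κ)`) has the same order as `σ`. -/
theorem nakayama_orderOf_eq
    (k : Type*) [Field k] (R : Type*) [CommRing R] [IsDomain R] [Algebra k R]
    (σ : R ≃ₐ[k] R) (hσ : σ ≠ AlgEquiv.refl)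
    (m : ℕ) (hm : 0 < m) (horder : orderOf σ = m)
    (δ : R →ₗ[k] R)
    (hLeib : ∀ f g : R, δ (f * g) = δ f * g + σ f * δ g)
    (κ : FractionRing R)
    (hκ : ∀ h : R, algebraMap R (FractionRing R) (δ h) =
      κ * (algebraMap R (FractionRing R) (σ h) - algebraMap R (FractionRing R) h))
    (σq : FractionRing R ≃+* FractionRing R)
    (hσq : ∀ r : R, σq (algebraMap R (FractionRing R) r) = algebraMap R (FractionRing R) (σ r))
    (J : k) (hJ : J ≠ 0) (hJm : J ^ m = 1)
    (b : R)
    (hb : algebraMap R (FractionRing R) b =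
      algebraMap k (FractionRing R) J * κ - σq.symm κ)
    (E : Type*) [Ring E] [Algebra k E] (ι : R →ₐ[k] E) (x : E)
    (hrel : ∀ f : R, x * ι f = ι (σ f) * x + ι (δ f))
    (hspan : ∀ e : E, ∃ (l : ℕ) (g : ℕ → R), e = ∑ i ∈ Finset.range l, ι (g i) * x ^ i)
    (hind : ∀ (l : ℕ) (g : ℕ → R),
      (∑ i ∈ Finset.range l, ι (g i) * x ^ i) = 0 → ∀ i < l, g i = 0)
    (ν : E ≃ₐ[k] E)
    (hνR : ∀ f : R, ν (ι f) = ι (σ.symm f))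
    (hνx : ν x = algebraMap k E J * x + ι b) :
    orderOf ν = orderOf σ := by
  set A := algebraMap R (FractionRing R) with hAdef
  -- injectivity of ι
  have hι : Function.Injective ι := by
    intro r s hrs
    have h0 : (∑ i ∈ Finset.range 1, ι ((fun _ => r - s) i) * x ^ i) = 0 := by
      simp [map_sub, hrs]
    have := hind 1 (fun _ => r - s) h0 0 (by norm_num)
    exact sub_eq_zero.mp this
  have hAinj : Function.Injective A := IsFractionRing.injective R (FractionRing R)
  -- σ ^ m = 1
  have hσm : σ ^ m = 1 := horder ▸ pow_orderOf_eq_one σ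
  -- pow-apply lemmas
  have hmulE : ∀ (f g : E ≃ₐ[k] E) (e : E), (f * g) e = f (g e) := fun _ _ _ => rfl
  have hmulR : ∀ (f g : R ≃ₐ[k] R) (r : R), (f * g) r = f (g r) := fun _ _ _ => rfl
  -- σq fixes the image of J
  have hJfix : σq (algebraMap k (FractionRing R) J) = algebraMap k (FractionRing R) J := by
    rw [IsScalarTower.algebraMap_apply k R (FractionRing R), hσq, AlgEquiv.commutes]
  have hJfix' : σq.symm (algebraMap k (FractionRing R) J) = algebraMap k (FractionRing R) J := by
    conv_lhs => rw [← hJfix]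
    exact σq.symm_apply_apply _
  -- A ∘ σ.symm = σq.symm ∘ A
  have hσqsymm : ∀ r : R, A (σ.symm r) = σq.symm (A r) := by
    intro r
    have h := hσq (σ.symm r)
    rw [AlgEquiv.apply_symm_apply] at h
    rw [← h, RingEquiv.symm_apply_apply]
  -- the sequence β
  set β : ℕ → R := betaSeq σ.symm J b with hβdef
  -- key computation in the fraction field
  have hC2 : ∀ n : ℕ, A (β n) = algebraMap k (FractionRing R) J ^ n * κ - (⇑σq.symm)^[n] κ := by
    intro n
    induction n with
    | zero => simp [hβdef, betaSeq]
    | succ n ih =>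
      have hsm : A (J ^ n • b) = algebraMap k (FractionRing R) J ^ n * A b := by
        rw [Algebra.smul_def, map_mul, ← IsScalarTower.algebraMap_apply k R (FractionRing R), map_pow]
      calc A (β (n + 1)) = A (J ^ n • b) + A (σ.symm (β n)) := by
            rw [hβdef]; simp only [betaSeq, map_add]
        _ = algebraMap k (FractionRing R) J ^ n * A b + σq.symm (A (β n)) := by rw [hsm, hσqsymm]
        _ = algebraMap k (FractionRing R) J ^ (n + 1) * κ - (⇑σq.symm)^[n + 1] κ := by
            rw [hb, ih, Function.iterate_succ_apply', map_sub, map_mul, map_pow, hJfix']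
            ring
  -- (σq.symm)^[m] = id
  have hσqm : ∀ y : FractionRing R, (⇑σq.symm)^[m] y = y := by
    have hpow : ∀ n : ℕ, ∀ y : FractionRing R, ((σq.symm ^ n : FractionRing R ≃+* FractionRing R)) y = (⇑σq.symm)^[n] y := by
      intro n
      induction n with
      | zero => intro y; rfl
      | succ n ih =>
        intro y
        rw [pow_succ']
        show σq.symm ((σq.symm ^ n) y) = _
        rw [ih, Function.iterate_succ_apply']
    have hfixR : ∀ n : ℕ, ∀ r : R,
        ((σq.symm ^ n : FractionRing R ≃+* FractionRing R)) (A r) = A (((σ.symm ^ n : R ≃ₐ[k] R)) r) := by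
      intro n
      induction n with
      | zero => intro r; rfl
      | succ n ih =>
        intro r
        rw [pow_succ', pow_succ']
        show σq.symm ((σq.symm ^ n) (A r)) = A (σ.symm ((σ.symm ^ n) r))
        rw [ih, hσqsymm]
    have hσsm : σ.symm ^ m = 1 := by
      have h : σ.symm = σ⁻¹ := rfl
      rw [h, inv_pow, hσm, inv_one]
    have hRm : ∀ r : R, ((σq.symm ^ m : FractionRing R ≃+* FractionRing R)) (A r) = A r := by
      intro r; rw [hfixR, hσsm]; rfl
    have hext : ((σq.symm ^ m : FractionRing R ≃+* FractionRing R) : FractionRing R →+* FractionRing R) = RingHom.id (FractionRing R) := by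
      apply IsLocalization.ringHom_ext (nonZeroDivisors R)
      ext r; simpa using hRm r
    intro y
    rw [← hpow]
    exact DFunLike.congr_fun hext y
  -- β m = 0
  have hβm : β m = 0 := by
    apply hAinj
    rw [hC2, hσqm, ← map_pow, hJm, map_one, one_mul, sub_self, map_zero]
  -- action of powers of ν on x
  have hC1 : ∀ n : ℕ, ((ν ^ n : E ≃ₐ[k] E)) x = algebraMap k E (J ^ n) * x + ι (β n) := by
    intro n
    induction n with
    | zero => simp [hβdef, betaSeq]
    | succ n ih =>
      have hstep : ((ν ^ (n + 1) : E ≃ₐ[k] E)) x = ν (((ν ^ n : E ≃ₐ[k] E)) x) := by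
        rw [pow_succ']; exact hmulE ν (ν ^ n) x
      rw [hstep, ih, map_add, map_mul, AlgEquiv.commutes, hνx, hνR]
      have hsm : algebraMap k E (J ^ n) * ι b = ι (J ^ n • b) := by
        rw [Algebra.smul_def, map_mul, AlgHom.commutes]
      rw [mul_add, ← mul_assoc, ← map_mul, ← pow_succ]
      rw [add_assoc, hsm, ← map_add]
      rfl
  -- ν fixes ι pointwise after n steps via σ.symm ^ n
  have hνR' : ∀ n : ℕ, ∀ f : R,
      ((ν ^ n : E ≃ₐ[k] E)) (ι f) = ι (((σ.symm ^ n : R ≃ₐ[k] R)) f) := by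
    intro n
    induction n with
    | zero => intro f; rfl
    | succ n ih =>
      intro f
      rw [pow_succ', pow_succ']
      rw [hmulE ν (ν ^ n), ih, hνR, hmulR σ.symm (σ.symm ^ n)]
  have hσsm : σ.symm ^ m = 1 := by
    have h : σ.symm = σ⁻¹ := rfl
    rw [h, inv_pow, hσm, inv_one]
  -- ν ^ m = 1
  have hνm : ν ^ m = 1 := by
    ext e
    obtain ⟨l, g, rfl⟩ := hspan e
    rw [map_sum]
    refine (Finset.sum_congr rfl fun i _ => ?_).trans rfl
    rw [map_mul, map_pow, hνR' m, hσsm, hC1 m, hJm, map_one, one_mul, hβm, map_zero, add_zero]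
    rfl
  -- conclude
  have h1 : orderOf ν ∣ m := orderOf_dvd_of_pow_eq_one hνm
  have h2 : m ∣ orderOf ν := by
    rw [← horder]
    apply orderOf_dvd_of_pow_eq_one
    have hν' : ν ^ orderOf ν = 1 := pow_orderOf_eq_one ν
    have hfix : ∀ f : R, ι (((σ.symm ^ orderOf ν : R ≃ₐ[k] R)) f) = ι f := by
      intro f
      rw [← hνR', hν']; rfl
    have hsymm : σ.symm ^ orderOf ν = 1 := by
      ext f
      exact hι (hfix f)
    have h : σ.symm = σ⁻¹ := rfl
    rw [h, inv_pow] at hsymm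
    rw [← inv_inv (σ ^ orderOf ν), hsymm, inv_one]
  rw [horder]
  exact Nat.dvd_antisymm h1 h2
end

section
/- Let R be a commutative integral domain, σ an automorphism of R with σ ≠ id, δ the σ-derivation with δ(h) = κ(σ(h) − h) for a fixed κ ∈ Frac(R), E = R[x; σ, δ], J ∈ k^×, and b ∈ R. If the assignment ν|_R = σ^{-1}, ν(x) = Jx + b extends to a k-algebra homomorphism E → E (equivalently, (Jx + b)·σ^{-1}(f) = f·(Jx + b) + σ^{-1}(δ(f)) in E for all f ∈ R), then b = Jκ − σ_q^{-1}(κ) in Frac(R), where σ_q is the extension of σ to Frac(R). -/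
/-- If `ν|_R = σ⁻¹`, `ν(x) = Jx + b` extends to an algebra homomorphism of
`E = R[x; σ, δ]` (equivalently `(Jx + b)·σ⁻¹(f) = f·(Jx + b) + σ⁻¹(δ(f))` for all `f`),
then `b = Jκ − σ_q⁻¹(κ)` in `Frac(R)`. -/
theorem nakayama_b_determined
    (k : Type*) [Field k] (R : Type*) [CommRing R] [IsDomain R] [Algebra k R]
    (σ : R ≃ₐ[k] R) (hσ : σ ≠ AlgEquiv.refl)
    (κ : FractionRing R)
    (δ : R →ₗ[k] R)
    (hLeib : ∀ f g : R, δ (f * g) = δ f * g + σ f * δ g)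
    (hκ : ∀ h : R, algebraMap R (FractionRing R) (δ h) =
      κ * (algebraMap R (FractionRing R) (σ h) - algebraMap R (FractionRing R) h))
    (σq : FractionRing R ≃+* FractionRing R)
    (hσq : ∀ r : R, σq (algebraMap R (FractionRing R) r) = algebraMap R (FractionRing R) (σ r))
    (E : Type*) [Ring E] [Algebra k E] (ι : R →ₐ[k] E) (x : E)
    (hinj : Function.Injective ι)
    (hfree : ∀ a c : R, ι a * x + ι c = 0 → a = 0 ∧ c = 0)
    (hrel : ∀ f : R, x * ι f = ι (σ f) * x + ι (δ f))
    (J : k) (hJ : J ≠ 0) (b : R)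
    (hcomm : ∀ f : R,
      (algebraMap k E J * x + ι b) * ι (σ.symm f) =
        ι f * (algebraMap k E J * x + ι b) + ι (σ.symm (δ f))) :
    algebraMap R (FractionRing R) b =
      algebraMap k (FractionRing R) J * κ - σq.symm κ := by
  classical
  -- choose f with σ f ≠ f
  obtain ⟨f, hf⟩ : ∃ r : R, σ r ≠ r := by
    by_contra h
    push_neg at h
    exact hσ (AlgEquiv.ext fun r => h r)
  set c : R := algebraMap k R J with hc
  have hce : (algebraMap k E) J = ι c := by
    rw [hc, AlgHom.commutes]
  -- derive the relation in R
  have h := hcomm f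
  rw [hce, add_mul, mul_assoc, hrel, σ.apply_symm_apply] at h
  have hswap : ι c * (ι f * x) = ι f * (ι c * x) := by
    rw [← mul_assoc, ← map_mul, mul_comm c f, map_mul, mul_assoc]
  rw [mul_add, hswap, mul_add, add_assoc, add_assoc] at h
  have hkeyE : ι c * ι (δ (σ.symm f)) + ι b * ι (σ.symm f)
      = ι f * ι b + ι (σ.symm (δ f)) := add_left_cancel h
  have key : c * δ (σ.symm f) + b * σ.symm f = f * b + σ.symm (δ f) := by
    apply hinj
    simpa only [map_add, map_mul] using hkeyE
  -- move to the fraction field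
  set φ := algebraMap R (FractionRing R) with hφ
  have hφinj : Function.Injective φ := IsFractionRing.injective R (FractionRing R)
  have hsym : ∀ s : R, φ (σ.symm s) = σq.symm (φ s) := by
    intro s
    apply σq.injective
    rw [σq.apply_symm_apply, hσq, σ.apply_symm_apply]
  have hkeyF := congrArg φ key
  simp only [map_add, map_mul] at hkeyF
  rw [hκ (σ.symm f), σ.apply_symm_apply] at hkeyF
  have hδf : φ (σ.symm ((δ : R →ₗ[k] R) f)) = σq.symm κ * (φ f - φ (σ.symm f)) := by
    rw [hsym, hκ f, map_mul, map_sub]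
    congr 1
    rw [hsym]
    congr 1
    apply σq.injective
    rw [σq.apply_symm_apply, hσq]
  rw [hδf] at hkeyF
  have hcφ : φ c = algebraMap k (FractionRing R) J := by
    rw [hc, ← IsScalarTower.algebraMap_apply]
  rw [hcφ] at hkeyF
  -- hkeyF : J' * (κ * (φ f - φ (σ.symm f))) + φ b * φ (σ.symm f)
  --       = φ f * φ b + σq.symm κ * (φ f - φ (σ.symm f))
  have hne : φ f - φ (σ.symm f) ≠ 0 := by
    intro h0
    apply hf
    have h2 : f = σ.symm f := hφinj (sub_eq_zero.mp h0)
    conv_lhs => rw [h2]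
    rw [σ.apply_symm_apply]
  have hmul : (algebraMap k (FractionRing R) J * κ - σq.symm κ - φ b)
      * (φ f - φ (σ.symm f)) = 0 := by ring_nf; linear_combination hkeyF
  rcases mul_eq_zero.mp hmul with h1 | h1
  · linear_combination -h1
  · exact absurd h1 hne
end

section
/- Let R be a k-algebra, σ ∈ Aut_k(R), δ a σ-derivation, and E = R[x; σ, δ]. Then the multiplication map E ⊗_R E → E fits into a short exact sequence of E-bimodules 0 → E^σ ⊗_R E → E ⊗_R E → E → 0, where the first map sends 1 ⊗ 1 to x ⊗ 1 − 1 ⊗ x (and E^σ denotes E with right R-action twisted by σ). In particular, the map E^σ ⊗_R E → E ⊗_R E determined by 1 ⊗ 1 ↦ x ⊗ 1 − 1 ⊗ x is injective and its image equals the kernel of the multiplication map. -/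
open TensorProduct

set_option synthInstance.maxHeartbeats 1000000
set_option maxHeartbeats 4000000

section ModuleStructures

variable (R E : Type*) [CommRing R] [Ring E]

/-- `E` viewed as an `R`-module via right multiplication twisted by `f`:
`r • e = e * f r`. -/
def RightTw (_f : R →+* E) : Type _ := E

instance (f : R →+* E) : AddCommGroup (RightTw R E f) := inferInstanceAs (AddCommGroup E)

noncomputable instance (f : R →+* E) : Module R (RightTw R E f) :=
  Module.compHom E (f.toOpposite fun a b => by
    simpa [Commute, SemiconjBy, ← map_mul] using congrArg f (mul_comm a b))

/-- `E` viewed as an `R`-module via left multiplication: `r • e = f r * e`. -/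
def LeftMod (_f : R →+* E) : Type _ := E

instance (f : R →+* E) : AddCommGroup (LeftMod R E f) := inferInstanceAs (AddCommGroup E)

noncomputable instance (f : R →+* E) : Module R (LeftMod R E f) := Module.compHom E f

/-- The identity of `E`, viewed as landing in `RightTw R E f`. -/
def toRightTw (f : R →+* E) (e : E) : RightTw R E f := e

/-- The identity of `E`, viewed as landing in `LeftMod R E f`. -/
def toLeftMod (f : R →+* E) (e : E) : LeftMod R E f := e

end ModuleStructures

open Finset

section Coef
variable {k : Type*} [Field k] {R E : Type*} [CommRing R] [Ring E]
  [Algebra k R] [Algebra k E]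
variable {ι : R →ₐ[k] E} {x : E}

/-- Coefficients of `e` in the basis `x^i`. -/
noncomputable def coef
    (hspan : ∀ e : E, ∃ (l : ℕ) (g : ℕ → R), e = ∑ i ∈ Finset.range l, ι (g i) * x ^ i)
    (e : E) (i : ℕ) : R :=
  if i < (hspan e).choose then (hspan e).choose_spec.choose i else 0

variable (hspan : ∀ e : E, ∃ (l : ℕ) (g : ℕ → R), e = ∑ i ∈ Finset.range l, ι (g i) * x ^ i)
variable (hind : ∀ (l : ℕ) (g : ℕ → R),
      (∑ i ∈ Finset.range l, ι (g i) * x ^ i) = 0 → ∀ i < l, g i = 0)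

lemma pad_sum (L : ℕ) (g : ℕ → R) {M : ℕ} (hLM : L ≤ M) :
    ∑ i ∈ Finset.range M, ι (if i < L then g i else 0) * x ^ i
      = ∑ i ∈ Finset.range L, ι (g i) * x ^ i := by
  rw [← Finset.sum_subset (Finset.range_subset_range.mpr hLM)]
  · exact Finset.sum_congr rfl fun i hi => by
      rw [if_pos (Finset.mem_range.mp hi)]
  · intro i _ hi
    rw [if_neg (by simpa using hi), map_zero, zero_mul]

lemma iota_comm (a b : R) : (ι a : E) * ι b = ι b * ι a := by
  rw [← map_mul, ← map_mul, mul_comm]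

include hind in
lemma rep_unique {l₁ l₂ : ℕ} {g₁ g₂ : ℕ → R}
    (h : ∑ i ∈ Finset.range l₁, ι (g₁ i) * x ^ i
        = ∑ i ∈ Finset.range l₂, ι (g₂ i) * x ^ i) (i : ℕ) :
    (if i < l₁ then g₁ i else 0) = (if i < l₂ then g₂ i else 0) := by
  set M := max l₁ l₂ with hM
  have h1 := pad_sum (ι := ι) (x := x) l₁ g₁ (le_max_left l₁ l₂)
  have h2 := pad_sum (ι := ι) (x := x) l₂ g₂ (le_max_right l₁ l₂)
  have h0 : ∑ i ∈ Finset.range M,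
      ι ((if i < l₁ then g₁ i else 0) - (if i < l₂ then g₂ i else 0)) * x ^ i = 0 := by
    have : ∀ i, ι ((if i < l₁ then g₁ i else 0) - (if i < l₂ then g₂ i else 0)) * x ^ i
        = ι (if i < l₁ then g₁ i else 0) * x ^ i - ι (if i < l₂ then g₂ i else 0) * x ^ i := by
      intro i; rw [map_sub, sub_mul]
    rw [Finset.sum_congr rfl fun i _ => this i, Finset.sum_sub_distrib, h1, h2, h, sub_self]
  have := hind M _ h0
  by_cases hi : i < M
  · exact sub_eq_zero.mp (this i hi)
  · rw [if_neg (by omega), if_neg (by omega)]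

include hind in
lemma coef_eq {e : E} {L : ℕ} {g : ℕ → R}
    (h : e = ∑ i ∈ Finset.range L, ι (g i) * x ^ i) (i : ℕ) :
    coef hspan e i = if i < L then g i else 0 := by
  unfold coef
  exact rep_unique hind ((hspan e).choose_spec.choose_spec.symm.trans h) i

lemma coef_sum_deg (e : E) :
    e = ∑ i ∈ Finset.range (hspan e).choose, ι (coef hspan e i) * x ^ i := by
  conv_lhs => rw [(hspan e).choose_spec.choose_spec]
  refine Finset.sum_congr rfl fun i hi => ?_
  unfold coef
  rw [if_pos (Finset.mem_range.mp hi)]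

lemma coef_zero_of_le {e : E} {i : ℕ} (h : (hspan e).choose ≤ i) :
    coef hspan e i = 0 := if_neg (by omega)

lemma coef_sum (e : E) {M : ℕ} (h : (hspan e).choose ≤ M) :
    e = ∑ i ∈ Finset.range M, ι (coef hspan e i) * x ^ i := by
  have h1 := pad_sum (ι := ι) (x := x) (hspan e).choose (coef hspan e) h
  have : ∀ i, (if i < (hspan e).choose then coef hspan e i else 0) = coef hspan e i := by
    intro i
    by_cases hi : i < (hspan e).choose
    · rw [if_pos hi]
    · rw [if_neg hi, coef_zero_of_le hspan (by omega)]
  rw [Finset.sum_congr rfl (fun i _ => by rw [this i])] at h1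
  rw [h1]; exact coef_sum_deg hspan e

include hind in
lemma coef_add (e e' : E) (i : ℕ) :
    coef hspan (e + e') i = coef hspan e i + coef hspan e' i := by
  set M := max (hspan e).choose (hspan e').choose with hM
  have h : e + e' = ∑ i ∈ Finset.range M, ι (coef hspan e i + coef hspan e' i) * x ^ i := by
    rw [Finset.sum_congr rfl fun i _ => by rw [map_add, add_mul], Finset.sum_add_distrib,
      ← coef_sum hspan e (le_max_left _ _), ← coef_sum hspan e' (le_max_right _ _)]
  rw [coef_eq hspan hind h i]
  by_cases hi : i < M
  · rw [if_pos hi]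
  · rw [if_neg hi, coef_zero_of_le hspan (by omega), coef_zero_of_le hspan (by omega), add_zero]

include hind in
lemma coef_smul (r : R) (e : E) (i : ℕ) :
    coef hspan (ι r * e) i = r * coef hspan e i := by
  have h : ι r * e = ∑ i ∈ Finset.range (hspan e).choose, ι (r * coef hspan e i) * x ^ i := by
    conv_lhs => rw [coef_sum_deg hspan e, Finset.mul_sum]
    exact Finset.sum_congr rfl fun i _ => by rw [map_mul, mul_assoc]
  rw [coef_eq hspan hind h i]
  by_cases hi : i < (hspan e).choose
  · rw [if_pos hi]
  · rw [if_neg hi, coef_zero_of_le hspan (by omega), mul_zero]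

include hind in
lemma coef_pow (i j : ℕ) :
    coef hspan (x ^ i) j = if j = i then 1 else 0 := by
  have h : (x : E) ^ i = ∑ j ∈ Finset.range (i + 1), ι (if j = i then 1 else 0) * x ^ j := by
    rw [Finset.sum_eq_single i (fun b _ hb => by rw [if_neg hb, map_zero, zero_mul])
      (fun h => absurd (Finset.self_mem_range_succ i) h), if_pos rfl, map_one, one_mul]
  rw [coef_eq hspan hind h j]
  by_cases hj : j < i + 1
  · rw [if_pos hj]
  · rw [if_neg hj, if_neg (by omega)]

variable {σ : R ≃ₐ[k] R} {δ : R →ₗ[k] R}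
variable (hrel : ∀ f : R, x * ι f = ι (σ f) * x + ι (δ f))

include hind hrel in
lemma coef_x_mul (e : E) (i : ℕ) :
    coef hspan (x * e) i
      = σ (Nat.rec (motive := fun _ => R) 0 (fun j _ => coef hspan e j) i) + δ (coef hspan e i) := by
  set d := (hspan e).choose with hd
  set w : ℕ → R := fun i =>
    σ (Nat.rec (motive := fun _ => R) 0 (fun j _ => coef hspan e j) i) + δ (coef hspan e i) with hw
  have h : x * e = ∑ i ∈ Finset.range (d + 1), ι (w i) * x ^ i := by
    have e1 : x * e = ∑ j ∈ Finset.range d,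
        (ι (σ (coef hspan e j)) * x ^ (j+1) + ι (δ (coef hspan e j)) * x ^ j) := by
      conv_lhs => rw [coef_sum_deg hspan e, Finset.mul_sum]
      refine Finset.sum_congr rfl fun j _ => ?_
      rw [← mul_assoc, hrel, add_mul, mul_assoc, ← pow_succ']
    rw [e1, Finset.sum_add_distrib]
    have e2 : ∑ j ∈ Finset.range d, ι (σ (coef hspan e j)) * x ^ (j+1)
        = ∑ i ∈ Finset.range (d+1),
            ι (σ (Nat.rec (motive := fun _ => R) (0:R) (fun j _ => coef hspan e j) i)) * x ^ i := by
      rw [Finset.sum_range_succ']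
      have hz : ι (σ ((Nat.rec (motive := fun _ => R) (0:R) (fun j _ => coef hspan e j) 0))) * x ^ 0 = 0 := by
        rw [show (Nat.rec (motive := fun _ => R) (0:R) (fun j _ => coef hspan e j) 0) = 0 from rfl, map_zero,
          map_zero, zero_mul]
      rw [hz, add_zero]
      -- closed by rw
    have e3 : ∑ j ∈ Finset.range d, ι (δ (coef hspan e j)) * x ^ j
        = ∑ i ∈ Finset.range (d+1), ι (δ (coef hspan e i)) * x ^ i := by
      rw [Finset.sum_range_succ, coef_zero_of_le hspan (le_refl d), map_zero, map_zero,
        zero_mul, add_zero]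
    rw [e2, e3, ← Finset.sum_add_distrib]
    exact Finset.sum_congr rfl fun i _ => by rw [hw]; simp [map_add, add_mul]
  rw [coef_eq hspan hind h i]
  by_cases hi : i < d + 1
  · rw [if_pos hi]
  · rw [if_neg hi]
    have h1 : coef hspan e i = 0 := coef_zero_of_le hspan (by omega)
    have h2 : (Nat.rec (motive := fun _ => R) (0:R) (fun j _ => coef hspan e j) i) = 0 := by
      cases i with
      | zero => rfl
      | succ j => exact coef_zero_of_le hspan (by omega)
    rw [h1, h2, map_zero, map_zero, add_zero]

include hind hrel in
lemma coef_x_mul_zero (e : E) :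
    coef hspan (x * e) 0 = δ (coef hspan e 0) := by
  rw [coef_x_mul hspan hind hrel e 0,
    show (Nat.rec (motive := fun _ => R) (0:R) (fun j _ => coef hspan e j) 0 : R) = 0 from rfl,
    map_zero, zero_add]

include hind hrel in
lemma coef_x_mul_succ (e : E) (i : ℕ) :
    coef hspan (x * e) (i+1) = σ (coef hspan e i) + δ (coef hspan e (i+1)) := by
  rw [coef_x_mul hspan hind hrel e (i+1)]

end Coef

section Mod
variable {k : Type*} [Field k] {R E : Type*} [CommRing R] [Ring E]
  [Algebra k R] [Algebra k E]
variable {σ : R ≃ₐ[k] R} {ι : R →ₐ[k] E} {x : E}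

def ofRightTw (f : R →+* E) : RightTw R E f → E := fun e => e
def ofLeftMod (f : R →+* E) : LeftMod R E f → E := fun e => e

@[simp] lemma ofRightTw_toRightTw (f : R →+* E) (e : E) :
    ofRightTw f (toRightTw R E f e) = e := rfl
@[simp] lemma ofLeftMod_toLeftMod (f : R →+* E) (e : E) :
    ofLeftMod f (toLeftMod R E f e) = e := rfl

variable (hspan : ∀ e : E, ∃ (l : ℕ) (g : ℕ → R), e = ∑ i ∈ Finset.range l, ι (g i) * x ^ i)
variable (hind : ∀ (l : ℕ) (g : ℕ → R),
      (∑ i ∈ Finset.range l, ι (g i) * x ^ i) = 0 → ∀ i < l, g i = 0)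

/-- The `i`-th coordinate map on `E ⊗ E`. -/
noncomputable def phi (i : ℕ) :
    RightTw R E ι.toRingHom ⊗[R] LeftMod R E ι.toRingHom →ₗ[R] RightTw R E ι.toRingHom :=
  TensorProduct.lift (LinearMap.mk₂ R
    (fun m n => toRightTw R E ι.toRingHom
      (ofRightTw ι.toRingHom m * ι (coef hspan (ofLeftMod ι.toRingHom n) i)))
    (fun m₁ m₂ n => by
      show toRightTw R E ι.toRingHom ((ofRightTw ι.toRingHom m₁ + ofRightTw ι.toRingHom m₂)
            * ι (coef hspan (ofLeftMod ι.toRingHom n) i))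
        = toRightTw R E ι.toRingHom (ofRightTw ι.toRingHom m₁
            * ι (coef hspan (ofLeftMod ι.toRingHom n) i))
          + toRightTw R E ι.toRingHom (ofRightTw ι.toRingHom m₂
            * ι (coef hspan (ofLeftMod ι.toRingHom n) i))
      rw [show ∀ a b : E, toRightTw R E ι.toRingHom a + toRightTw R E ι.toRingHom b
        = toRightTw R E ι.toRingHom (a + b) from fun _ _ => rfl, add_mul])
    (fun r m n => by
      show toRightTw R E ι.toRingHom ((ofRightTw ι.toRingHom m * ι r)
            * ι (coef hspan (ofLeftMod ι.toRingHom n) i))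
        = toRightTw R E ι.toRingHom ((ofRightTw ι.toRingHom m
            * ι (coef hspan (ofLeftMod ι.toRingHom n) i)) * ι r)
      rw [mul_assoc, mul_assoc, iota_comm])
    (fun m n₁ n₂ => by
      show toRightTw R E ι.toRingHom (ofRightTw ι.toRingHom m *
            ι (coef hspan (ofLeftMod ι.toRingHom n₁ + ofLeftMod ι.toRingHom n₂) i))
        = toRightTw R E ι.toRingHom (ofRightTw ι.toRingHom m
            * ι (coef hspan (ofLeftMod ι.toRingHom n₁) i))
          + toRightTw R E ι.toRingHom (ofRightTw ι.toRingHom m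
            * ι (coef hspan (ofLeftMod ι.toRingHom n₂) i))
      rw [show ∀ a b : E, toRightTw R E ι.toRingHom a + toRightTw R E ι.toRingHom b
        = toRightTw R E ι.toRingHom (a + b) from fun _ _ => rfl,
        coef_add hspan hind, map_add, mul_add])
    (fun r m n => by
      show toRightTw R E ι.toRingHom (ofRightTw ι.toRingHom m *
            ι (coef hspan (ι r * ofLeftMod ι.toRingHom n) i))
        = toRightTw R E ι.toRingHom ((ofRightTw ι.toRingHom m
            * ι (coef hspan (ofLeftMod ι.toRingHom n) i)) * ι r)
      rw [coef_smul hspan hind, mul_comm r, map_mul, ← mul_assoc]))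

lemma phi_tmul (i : ℕ) (e e' : E) :
    phi hspan hind i (toRightTw R E ι.toRingHom e ⊗ₜ[R] toLeftMod R E ι.toRingHom e')
      = toRightTw R E ι.toRingHom (e * ι (coef hspan e' i)) := rfl

/-- The `i`-th coordinate map on `E^σ ⊗ E`. -/
noncomputable def psi (i : ℕ) :
    RightTw R E (ι.toRingHom.comp σ.toAlgHom.toRingHom) ⊗[R] LeftMod R E ι.toRingHom →ₗ[R]
      RightTw R E (ι.toRingHom.comp σ.toAlgHom.toRingHom) :=
  TensorProduct.lift (LinearMap.mk₂ R
    (fun m n => toRightTw R E (ι.toRingHom.comp σ.toAlgHom.toRingHom)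
      (ofRightTw (ι.toRingHom.comp σ.toAlgHom.toRingHom) m
        * ι (σ (coef hspan (ofLeftMod ι.toRingHom n) i))))
    (fun m₁ m₂ n => by
      show toRightTw R E (ι.toRingHom.comp σ.toAlgHom.toRingHom)
            ((ofRightTw (ι.toRingHom.comp σ.toAlgHom.toRingHom) m₁
              + ofRightTw (ι.toRingHom.comp σ.toAlgHom.toRingHom) m₂)
              * ι (σ (coef hspan (ofLeftMod ι.toRingHom n) i)))
        = toRightTw R E (ι.toRingHom.comp σ.toAlgHom.toRingHom)
            (ofRightTw (ι.toRingHom.comp σ.toAlgHom.toRingHom) m₁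
              * ι (σ (coef hspan (ofLeftMod ι.toRingHom n) i)))
          + toRightTw R E (ι.toRingHom.comp σ.toAlgHom.toRingHom)
            (ofRightTw (ι.toRingHom.comp σ.toAlgHom.toRingHom) m₂
              * ι (σ (coef hspan (ofLeftMod ι.toRingHom n) i)))
      rw [show ∀ a b : E, toRightTw R E (ι.toRingHom.comp σ.toAlgHom.toRingHom) a
          + toRightTw R E (ι.toRingHom.comp σ.toAlgHom.toRingHom) b
        = toRightTw R E (ι.toRingHom.comp σ.toAlgHom.toRingHom) (a + b) from fun _ _ => rfl,
        add_mul])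
    (fun r m n => by
      show toRightTw R E (ι.toRingHom.comp σ.toAlgHom.toRingHom)
            ((ofRightTw (ι.toRingHom.comp σ.toAlgHom.toRingHom) m * ι (σ r))
              * ι (σ (coef hspan (ofLeftMod ι.toRingHom n) i)))
        = toRightTw R E (ι.toRingHom.comp σ.toAlgHom.toRingHom)
            ((ofRightTw (ι.toRingHom.comp σ.toAlgHom.toRingHom) m
              * ι (σ (coef hspan (ofLeftMod ι.toRingHom n) i))) * ι (σ r))
      rw [mul_assoc, mul_assoc, iota_comm])
    (fun m n₁ n₂ => by
      show toRightTw R E (ι.toRingHom.comp σ.toAlgHom.toRingHom)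
            (ofRightTw (ι.toRingHom.comp σ.toAlgHom.toRingHom) m *
              ι (σ (coef hspan (ofLeftMod ι.toRingHom n₁ + ofLeftMod ι.toRingHom n₂) i)))
        = toRightTw R E (ι.toRingHom.comp σ.toAlgHom.toRingHom)
            (ofRightTw (ι.toRingHom.comp σ.toAlgHom.toRingHom) m
              * ι (σ (coef hspan (ofLeftMod ι.toRingHom n₁) i)))
          + toRightTw R E (ι.toRingHom.comp σ.toAlgHom.toRingHom)
            (ofRightTw (ι.toRingHom.comp σ.toAlgHom.toRingHom) m
              * ι (σ (coef hspan (ofLeftMod ι.toRingHom n₂) i)))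
      rw [show ∀ a b : E, toRightTw R E (ι.toRingHom.comp σ.toAlgHom.toRingHom) a
          + toRightTw R E (ι.toRingHom.comp σ.toAlgHom.toRingHom) b
        = toRightTw R E (ι.toRingHom.comp σ.toAlgHom.toRingHom) (a + b) from fun _ _ => rfl,
        coef_add hspan hind, map_add, map_add, mul_add])
    (fun r m n => by
      show toRightTw R E (ι.toRingHom.comp σ.toAlgHom.toRingHom)
            (ofRightTw (ι.toRingHom.comp σ.toAlgHom.toRingHom) m *
              ι (σ (coef hspan (ι r * ofLeftMod ι.toRingHom n) i)))
        = toRightTw R E (ι.toRingHom.comp σ.toAlgHom.toRingHom)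
            ((ofRightTw (ι.toRingHom.comp σ.toAlgHom.toRingHom) m
              * ι (σ (coef hspan (ofLeftMod ι.toRingHom n) i))) * ι (σ r))
      rw [coef_smul hspan hind, mul_comm r, map_mul, map_mul, ← mul_assoc]))

lemma psi_tmul (i : ℕ) (e e' : E) :
    psi hspan hind i (toRightTw R E (ι.toRingHom.comp σ.toAlgHom.toRingHom) e
        ⊗ₜ[R] toLeftMod R E ι.toRingHom e')
      = toRightTw R E (ι.toRingHom.comp σ.toAlgHom.toRingHom) (e * ι (σ (coef hspan e' i)))
    := rfl

include hspan in
/-- Every element of `E_f ⊗ E` is a finite sum `∑ aᵢ ⊗ x^i`. -/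
lemma exists_rep (f : R →+* E) (t : RightTw R E f ⊗[R] LeftMod R E ι.toRingHom) :
    ∃ (N : ℕ) (a : ℕ → E), (∀ i, N ≤ i → a i = 0) ∧
      t = ∑ i ∈ Finset.range N, toRightTw R E f (a i) ⊗ₜ[R] toLeftMod R E ι.toRingHom (x ^ i)
    := by
  induction t with
  | zero => exact ⟨0, fun _ => 0, fun _ _ => rfl, (Finset.sum_range_zero _).symm⟩
  | tmul m n =>
    refine ⟨(hspan (ofLeftMod ι.toRingHom n)).choose,
      fun i => ofRightTw f m * f (coef hspan (ofLeftMod ι.toRingHom n) i), fun i hi => ?_, ?_⟩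
    · show ofRightTw f m * f (coef hspan (ofLeftMod ι.toRingHom n) i) = 0
      rw [coef_zero_of_le hspan hi, map_zero, mul_zero]
    · have key : ∀ i, toRightTw R E f
            (ofRightTw f m * f (coef hspan (ofLeftMod ι.toRingHom n) i))
            ⊗ₜ[R] toLeftMod R E ι.toRingHom (x ^ i)
          = m ⊗ₜ[R] (coef hspan (ofLeftMod ι.toRingHom n) i • toLeftMod R E ι.toRingHom (x ^ i))
          := fun i => smul_tmul (coef hspan (ofLeftMod ι.toRingHom n) i) m
            (toLeftMod R E ι.toRingHom (x ^ i))
      have hsum : (∑ i ∈ Finset.range (hspan (ofLeftMod ι.toRingHom n)).choose,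
          coef hspan (ofLeftMod ι.toRingHom n) i • toLeftMod R E ι.toRingHom (x ^ i)) = n :=
        (coef_sum_deg hspan (ofLeftMod ι.toRingHom n)).symm
      calc m ⊗ₜ[R] n
          = ∑ i ∈ Finset.range (hspan (ofLeftMod ι.toRingHom n)).choose,
            m ⊗ₜ[R] (coef hspan (ofLeftMod ι.toRingHom n) i • toLeftMod R E ι.toRingHom (x ^ i))
            := by rw [← TensorProduct.tmul_sum, hsum]
        _ = _ := Finset.sum_congr rfl fun i _ => (key i).symm
  | add t₁ t₂ ih₁ ih₂ =>
    obtain ⟨N₁, a₁, h₁, e₁⟩ := ih₁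
    obtain ⟨N₂, a₂, h₂, e₂⟩ := ih₂
    refine ⟨max N₁ N₂, a₁ + a₂, fun i hi => ?_, ?_⟩
    · show a₁ i + a₂ i = 0
      rw [h₁ i (le_trans (le_max_left _ _) hi), h₂ i (le_trans (le_max_right _ _) hi), add_zero]
    · have ext : ∀ (N : ℕ) (a : ℕ → E), (∀ i, N ≤ i → a i = 0) → N ≤ max N₁ N₂ →
          (∑ i ∈ Finset.range N, toRightTw R E f (a i) ⊗ₜ[R] toLeftMod R E ι.toRingHom (x ^ i))
          = ∑ i ∈ Finset.range (max N₁ N₂),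
              toRightTw R E f (a i) ⊗ₜ[R] toLeftMod R E ι.toRingHom (x ^ i) := by
        intro N a h hN
        refine Finset.sum_subset (Finset.range_subset_range.mpr hN) fun i _ hi => ?_
        rw [h i (by simpa using hi)]
        exact TensorProduct.zero_tmul _ _
      rw [e₁, e₂, ext N₁ a₁ h₁ (le_max_left _ _), ext N₂ a₂ h₂ (le_max_right _ _),
        ← Finset.sum_add_distrib]
      refine Finset.sum_congr rfl fun i _ => ?_
      show _ = toRightTw R E f (a₁ i + a₂ i) ⊗ₜ[R] toLeftMod R E ι.toRingHom (x ^ i)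
      rw [show toRightTw R E f (a₁ i + a₂ i)
          = toRightTw R E f (a₁ i) + toRightTw R E f (a₂ i) from rfl,
        TensorProduct.add_tmul]

/-- Coordinates of a represented element (untwisted). -/
lemma phi_rep (N : ℕ) (a : ℕ → E) (h0 : ∀ i, N ≤ i → a i = 0) (j : ℕ) :
    phi hspan hind j (∑ i ∈ Finset.range N,
        toRightTw R E ι.toRingHom (a i) ⊗ₜ[R] toLeftMod R E ι.toRingHom (x ^ i))
      = toRightTw R E ι.toRingHom (a j) := by
  rw [map_sum]
  rw [Finset.sum_congr rfl fun i _ => phi_tmul hspan hind j (a i) (x ^ i)]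
  have term : ∀ i, toRightTw R E ι.toRingHom (a i * ι (coef hspan (x ^ i) j))
      = toRightTw R E ι.toRingHom (a i * ι (if j = i then 1 else 0)) := by
    intro i; rw [coef_pow hspan hind]
  rw [Finset.sum_congr rfl fun i _ => term i]
  rw [Finset.sum_eq_single j (fun b _ hb => by
      rw [if_neg (fun h => hb h.symm), map_zero, mul_zero]; rfl)
    (fun hj => by
      rw [if_pos rfl, map_one, mul_one, h0 j (by simpa using hj)]; rfl)]
  rw [if_pos rfl, map_one, mul_one]

/-- Coordinates of a represented element (twisted). -/
lemma psi_rep (N : ℕ) (a : ℕ → E) (h0 : ∀ i, N ≤ i → a i = 0) (j : ℕ) :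
    psi hspan hind j (∑ i ∈ Finset.range N,
        toRightTw R E (ι.toRingHom.comp σ.toAlgHom.toRingHom) (a i)
          ⊗ₜ[R] toLeftMod R E ι.toRingHom (x ^ i))
      = toRightTw R E (ι.toRingHom.comp σ.toAlgHom.toRingHom) (a j) := by
  rw [map_sum]
  rw [Finset.sum_congr rfl fun i _ => psi_tmul hspan hind j (a i) (x ^ i)]
  have term : ∀ i, toRightTw R E (ι.toRingHom.comp σ.toAlgHom.toRingHom)
        (a i * ι (σ (coef hspan (x ^ i) j)))
      = toRightTw R E (ι.toRingHom.comp σ.toAlgHom.toRingHom)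
        (a i * ι (σ (if j = i then 1 else 0))) := by
    intro i; rw [coef_pow hspan hind]
  rw [Finset.sum_congr rfl fun i _ => term i]
  rw [Finset.sum_eq_single j (fun b _ hb => by
      rw [if_neg (fun h => hb h.symm), map_zero, map_zero, mul_zero]; rfl)
    (fun hj => by
      rw [if_pos rfl, map_one, map_one, mul_one, h0 j (by simpa using hj)]; rfl)]
  rw [if_pos rfl, map_one, map_one, mul_one]

end Mod


/-- For an Ore extension `E = R[x; σ, δ]`, there is a short exact sequence
of `E`-bimodules `0 → E^σ ⊗_R E → E ⊗_R E → E → 0` where the first map is determined by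
`1 ⊗ 1 ↦ x ⊗ 1 − 1 ⊗ x` (i.e. `e ⊗ e' ↦ ex ⊗ e' − e ⊗ xe'`) and the second is the
multiplication map: the multiplication map is surjective, the first map is injective, and
its range equals the kernel of the multiplication map. -/
theorem ore_extension_short_exact_sequence
    (k : Type*) [Field k] (R E : Type*) [CommRing R] [Ring E]
    [Algebra k R] [Algebra k E]
    (σ : R ≃ₐ[k] R) (δ : R →ₗ[k] R)
    (hLeib : ∀ f g : R, δ (f * g) = δ f * g + σ f * δ g)
    (ι : R →ₐ[k] E) (x : E)
    (hrel : ∀ f : R, x * ι f = ι (σ f) * x + ι (δ f))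
    (hspan : ∀ e : E, ∃ (l : ℕ) (g : ℕ → R), e = ∑ i ∈ Finset.range l, ι (g i) * x ^ i)
    (hind : ∀ (l : ℕ) (g : ℕ → R),
      (∑ i ∈ Finset.range l, ι (g i) * x ^ i) = 0 → ∀ i < l, g i = 0)
    (μ : RightTw R E ι.toRingHom ⊗[R] LeftMod R E ι.toRingHom →+ E)
    (hμ : ∀ e e' : E,
      μ (toRightTw R E ι.toRingHom e ⊗ₜ[R] toLeftMod R E ι.toRingHom e') = e * e')
    (ρ : RightTw R E (ι.toRingHom.comp σ.toAlgHom.toRingHom) ⊗[R] LeftMod R E ι.toRingHom →+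
      RightTw R E ι.toRingHom ⊗[R] LeftMod R E ι.toRingHom)
    (hρ : ∀ e e' : E,
      ρ (toRightTw R E (ι.toRingHom.comp σ.toAlgHom.toRingHom) e ⊗ₜ[R]
          toLeftMod R E ι.toRingHom e') =
        toRightTw R E ι.toRingHom (e * x) ⊗ₜ[R] toLeftMod R E ι.toRingHom e' -
          toRightTw R E ι.toRingHom e ⊗ₜ[R] toLeftMod R E ι.toRingHom (x * e')) :
    Function.Surjective μ ∧ Function.Injective ρ ∧
      ∀ t, μ t = 0 ↔ t ∈ Set.range ρ := by
  -- primed versions of the hypotheses and tmul formulas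
  have hμ' : ∀ (m : RightTw R E ι.toRingHom) (n : LeftMod R E ι.toRingHom),
      μ (m ⊗ₜ[R] n) = ofRightTw ι.toRingHom m * ofLeftMod ι.toRingHom n :=
    fun m n => hμ (ofRightTw ι.toRingHom m) (ofLeftMod ι.toRingHom n)
  have hρ' : ∀ (m : RightTw R E (ι.toRingHom.comp σ.toAlgHom.toRingHom)) (n : LeftMod R E ι.toRingHom),
      ρ (m ⊗ₜ[R] n) =
        toRightTw R E ι.toRingHom (ofRightTw (ι.toRingHom.comp σ.toAlgHom.toRingHom) m * x) ⊗ₜ[R] toLeftMod R E ι.toRingHom (ofLeftMod ι.toRingHom n) -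
          toRightTw R E ι.toRingHom (ofRightTw (ι.toRingHom.comp σ.toAlgHom.toRingHom) m) ⊗ₜ[R] toLeftMod R E ι.toRingHom (x * ofLeftMod ι.toRingHom n) :=
    fun m n => hρ (ofRightTw (ι.toRingHom.comp σ.toAlgHom.toRingHom) m) (ofLeftMod ι.toRingHom n)
  have phi_tmul' : ∀ (i : ℕ) (m : RightTw R E ι.toRingHom) (n : LeftMod R E ι.toRingHom),
      phi hspan hind i (m ⊗ₜ[R] n)
        = toRightTw R E ι.toRingHom (ofRightTw ι.toRingHom m * ι (coef hspan (ofLeftMod ι.toRingHom n) i)) :=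
    fun i m n => phi_tmul hspan hind i (ofRightTw ι.toRingHom m) (ofLeftMod ι.toRingHom n)
  have psi_tmul' : ∀ (i : ℕ) (m : RightTw R E (ι.toRingHom.comp σ.toAlgHom.toRingHom)) (n : LeftMod R E ι.toRingHom),
      psi (σ := σ) hspan hind i (m ⊗ₜ[R] n)
        = toRightTw R E (ι.toRingHom.comp σ.toAlgHom.toRingHom) (ofRightTw (ι.toRingHom.comp σ.toAlgHom.toRingHom) m * ι (σ (coef hspan (ofLeftMod ι.toRingHom n) i))) :=
    fun i m n => psi_tmul hspan hind i (ofRightTw (ι.toRingHom.comp σ.toAlgHom.toRingHom) m) (ofLeftMod ι.toRingHom n)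
  have toR_sub : ∀ a b : E, toRightTw R E ι.toRingHom a - toRightTw R E ι.toRingHom b = toRightTw R E ι.toRingHom (a - b) :=
    fun _ _ => rfl
  have toR_add : ∀ a b : E, toRightTw R E ι.toRingHom a + toRightTw R E ι.toRingHom b = toRightTw R E ι.toRingHom (a + b) :=
    fun _ _ => rfl
  -- the key commutation formulas : phi ∘ ρ in terms of psi
  have phiρ0 : ∀ s, phi hspan hind 0 (ρ s)
      = toRightTw R E ι.toRingHom (ofRightTw (ι.toRingHom.comp σ.toAlgHom.toRingHom) (psi (σ := σ) hspan hind 0 s) * x) := by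
    intro s
    induction s with
    | zero =>
      rw [map_zero, map_zero, map_zero,
        show ofRightTw (ι.toRingHom.comp σ.toAlgHom.toRingHom) (0 : RightTw R E (ι.toRingHom.comp σ.toAlgHom.toRingHom)) = (0:E) from rfl, zero_mul]
      rfl
    | tmul m n =>
      rw [hρ' m n, map_sub, phi_tmul', phi_tmul', psi_tmul']
      simp only [ofRightTw_toRightTw, ofLeftMod_toLeftMod]
      rw [coef_x_mul_zero hspan hind hrel, toR_sub]
      congr 1
      rw [mul_assoc, hrel, mul_add, ← mul_assoc, add_sub_cancel_right]
    | add s₁ s₂ ih₁ ih₂ =>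
      rw [map_add, map_add, ih₁, ih₂, map_add, toR_add,
        show ofRightTw (ι.toRingHom.comp σ.toAlgHom.toRingHom) (psi (σ := σ) hspan hind 0 s₁ + psi (σ := σ) hspan hind 0 s₂)
          = ofRightTw (ι.toRingHom.comp σ.toAlgHom.toRingHom) (psi (σ := σ) hspan hind 0 s₁)
            + ofRightTw (ι.toRingHom.comp σ.toAlgHom.toRingHom) (psi (σ := σ) hspan hind 0 s₂) from rfl, add_mul]
  have phiρS : ∀ (i : ℕ) s, phi hspan hind (i+1) (ρ s)
      = toRightTw R E ι.toRingHom (ofRightTw (ι.toRingHom.comp σ.toAlgHom.toRingHom) (psi (σ := σ) hspan hind (i+1) s) * x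
          - ofRightTw (ι.toRingHom.comp σ.toAlgHom.toRingHom) (psi (σ := σ) hspan hind i s)) := by
    intro i s
    induction s with
    | zero =>
      rw [map_zero, map_zero, map_zero, map_zero,
        show ofRightTw (ι.toRingHom.comp σ.toAlgHom.toRingHom) (0 : RightTw R E (ι.toRingHom.comp σ.toAlgHom.toRingHom)) = (0:E) from rfl, zero_mul, sub_zero]
      rfl
    | tmul m n =>
      rw [hρ' m n, map_sub, phi_tmul', phi_tmul', psi_tmul', psi_tmul']
      simp only [ofRightTw_toRightTw, ofLeftMod_toLeftMod]
      rw [coef_x_mul_succ hspan hind hrel, toR_sub]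
      congr 1
      rw [map_add, mul_add, mul_assoc, hrel, mul_add, ← mul_assoc]
      abel
    | add s₁ s₂ ih₁ ih₂ =>
      rw [map_add, map_add, ih₁, ih₂, map_add, map_add, toR_add,
        show ∀ a b : RightTw R E (ι.toRingHom.comp σ.toAlgHom.toRingHom), ofRightTw (ι.toRingHom.comp σ.toAlgHom.toRingHom) (a + b)
          = ofRightTw (ι.toRingHom.comp σ.toAlgHom.toRingHom) a + ofRightTw (ι.toRingHom.comp σ.toAlgHom.toRingHom) b from fun _ _ => rfl,
        show ∀ a b : RightTw R E (ι.toRingHom.comp σ.toAlgHom.toRingHom), ofRightTw (ι.toRingHom.comp σ.toAlgHom.toRingHom) (a + b)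
          = ofRightTw (ι.toRingHom.comp σ.toAlgHom.toRingHom) a + ofRightTw (ι.toRingHom.comp σ.toAlgHom.toRingHom) b from fun _ _ => rfl, add_mul]
      congr 1
      abel
  refine ⟨?_, ?_, ?_⟩
  · -- surjectivity
    intro e
    exact ⟨toRightTw R E ι.toRingHom e ⊗ₜ[R] toLeftMod R E ι.toRingHom 1, by rw [hμ e 1, mul_one]⟩
  · -- injectivity
    refine (injective_iff_map_eq_zero ρ).mpr fun s hs => ?_
    obtain ⟨N, a, h0, hrep⟩ := exists_rep hspan (ι.toRingHom.comp σ.toAlgHom.toRingHom) s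
    have hcoord : ∀ j, psi (σ := σ) hspan hind j s = toRightTw R E (ι.toRingHom.comp σ.toAlgHom.toRingHom) (a j) := fun j => by
      rw [hrep]; exact psi_rep hspan hind N a h0 j
    have hstep : ∀ i, psi (σ := σ) hspan hind i s
        = toRightTw R E (ι.toRingHom.comp σ.toAlgHom.toRingHom) (ofRightTw (ι.toRingHom.comp σ.toAlgHom.toRingHom) (psi (σ := σ) hspan hind (i+1) s) * x) := by
      intro i
      have h1 := phiρS i s
      rw [hs, map_zero] at h1
      have h2 : (0:E) = ofRightTw (ι.toRingHom.comp σ.toAlgHom.toRingHom) (psi (σ := σ) hspan hind (i+1) s) * x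
          - ofRightTw (ι.toRingHom.comp σ.toAlgHom.toRingHom) (psi (σ := σ) hspan hind i s) :=
        congrArg (ofRightTw ι.toRingHom) h1
      have h3 : ofRightTw (ι.toRingHom.comp σ.toAlgHom.toRingHom) (psi (σ := σ) hspan hind i s)
          = ofRightTw (ι.toRingHom.comp σ.toAlgHom.toRingHom) (psi (σ := σ) hspan hind (i+1) s) * x :=
        (sub_eq_zero.mp h2.symm).symm
      exact congrArg (toRightTw R E (ι.toRingHom.comp σ.toAlgHom.toRingHom)) h3
    have hzero : ∀ d i, N ≤ i + d → psi (σ := σ) hspan hind i s = 0 := by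
      intro d
      induction d with
      | zero =>
        intro i hi
        rw [hcoord i, h0 i (by omega)]
        rfl
      | succ d ih =>
        intro i hi
        rw [hstep i, ih (i+1) (by omega),
          show ofRightTw (ι.toRingHom.comp σ.toAlgHom.toRingHom) (0 : RightTw R E (ι.toRingHom.comp σ.toAlgHom.toRingHom)) = (0:E) from rfl, zero_mul]
        rfl
    have ha : ∀ j, a j = 0 := by
      intro j
      have := (hcoord j).symm.trans (hzero N j (by omega))
      exact congrArg (ofRightTw (ι.toRingHom.comp σ.toAlgHom.toRingHom)) this
    rw [hrep]
    refine Finset.sum_eq_zero fun i _ => ?_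
    rw [ha i, show toRightTw R E (ι.toRingHom.comp σ.toAlgHom.toRingHom) (0:E) = 0 from rfl]
    exact TensorProduct.zero_tmul _ _
  · -- kernel = range
    intro t
    constructor
    · -- μ t = 0 → t ∈ range ρ
      intro ht
      obtain ⟨N, a, h0, hrep⟩ := exists_rep hspan ι.toRingHom t
      have hsum : (∑ i ∈ Finset.range N, a i * x ^ i) = 0 := by
        have : μ t = ∑ i ∈ Finset.range N, a i * x ^ i := by
          rw [hrep, map_sum]
          exact Finset.sum_congr rfl fun i _ => hμ (a i) (x ^ i)
        rw [← this, ht]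
      by_cases hN : N = 0
      · refine ⟨0, ?_⟩
        rw [map_zero, hrep, hN]
        exact (Finset.sum_range_zero _).symm
      -- the preimage
      set F : ℕ → E := fun i => -(∑ j ∈ Finset.Ico (i+1) N, a j * x ^ (j - i - 1)) with hF
      have hFmul : ∀ i, F i * x = -(∑ j ∈ Finset.Ico (i+1) N, a j * x ^ (j - i)) := by
        intro i
        rw [hF, neg_mul, Finset.sum_mul]
        congr 1
        refine Finset.sum_congr rfl fun j hj => ?_
        have hji : i + 1 ≤ j := (Finset.mem_Ico.mp hj).1
        rw [mul_assoc, ← pow_succ, show j - i - 1 + 1 = j - i from by omega]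
      have hG0 : F 0 * x - a 0 = 0 := by
        have hpeel : (∑ j ∈ Finset.Ico 0 N, a j * x ^ j)
            = a 0 * x ^ 0 + ∑ j ∈ Finset.Ico 1 N, a j * x ^ j :=
          Finset.sum_eq_sum_Ico_succ_bot (by omega) _
        have h2 : a 0 + ∑ j ∈ Finset.Ico 1 N, a j * x ^ j = 0 := by
          rw [pow_zero, mul_one] at hpeel
          rw [← hpeel, ← Finset.range_eq_Ico]
          exact hsum
        have h1 : (∑ j ∈ Finset.Ico 1 N, a j * x ^ j) = - a 0 :=
          eq_neg_of_add_eq_zero_right h2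
        rw [hFmul 0]
        have he : (∑ j ∈ Finset.Ico (0+1) N, a j * x ^ (j - 0))
            = ∑ j ∈ Finset.Ico 1 N, a j * x ^ j := by
          refine Finset.sum_congr (by norm_num) fun j hj => by rw [Nat.sub_zero]
        rw [he, h1, neg_neg, sub_self]
      have hGS : ∀ i, F (i+1) * x - a (i+1) = F i := by
        intro i
        rw [hFmul (i+1)]
        show (-∑ j ∈ Finset.Ico (i+1+1) N, a j * x ^ (j - (i+1))) - a (i+1)
            = -∑ j ∈ Finset.Ico (i+1) N, a j * x ^ (j - i - 1)
        by_cases hiN : i + 1 < N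
        · have hpeel : (∑ j ∈ Finset.Ico (i+1) N, a j * x ^ (j - i - 1))
              = a (i+1) * x ^ (i + 1 - i - 1) + ∑ j ∈ Finset.Ico (i+2) N, a j * x ^ (j - i - 1) :=
            Finset.sum_eq_sum_Ico_succ_bot hiN _
          have he : (∑ j ∈ Finset.Ico (i+1+1) N, a j * x ^ (j - (i+1)))
              = ∑ j ∈ Finset.Ico (i+2) N, a j * x ^ (j - i - 1) := by
            refine Finset.sum_congr (by norm_num) fun j hj => ?_
            rw [show j - (i+1) = j - i - 1 from by omega]
          rw [he, hpeel, show i + 1 - i - 1 = 0 from by omega, pow_zero, mul_one]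
          abel
        · have e1 : Finset.Ico (i+1+1) N = ∅ := Finset.Ico_eq_empty (by omega)
          have e3 : Finset.Ico (i+1) N = ∅ := Finset.Ico_eq_empty (by omega)
          rw [e1, e3, Finset.sum_empty, Finset.sum_empty, neg_zero, zero_sub,
            h0 (i+1) (by omega), neg_zero]
      refine ⟨∑ i ∈ Finset.range N, toRightTw R E (ι.toRingHom.comp σ.toAlgHom.toRingHom) (F i) ⊗ₜ[R] toLeftMod R E ι.toRingHom (x ^ i), ?_⟩
      rw [map_sum, Finset.sum_congr rfl fun i _ => hρ (F i) (x ^ i), Finset.sum_sub_distrib]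
      -- second sum : shift the index
      set G : ℕ → E := fun i => F i * x - a i with hG
      have hB : (∑ i ∈ Finset.range N,
            toRightTw R E ι.toRingHom (F i) ⊗ₜ[R] toLeftMod R E ι.toRingHom (x * x ^ i))
          = ∑ i ∈ Finset.range N, toRightTw R E ι.toRingHom (G i) ⊗ₜ[R] toLeftMod R E ι.toRingHom (x ^ i) := by
        have hstep : ∀ i, toRightTw R E ι.toRingHom (F i) ⊗ₜ[R] toLeftMod R E ι.toRingHom (x * x ^ i)
            = toRightTw R E ι.toRingHom (G (i+1)) ⊗ₜ[R] toLeftMod R E ι.toRingHom (x ^ (i+1)) := by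
          intro i
          rw [← pow_succ', hG]
          show _ = toRightTw R E ι.toRingHom (F (i+1) * x - a (i+1)) ⊗ₜ[R] toLeftMod R E ι.toRingHom (x ^ (i+1))
          rw [hGS i]
        rw [Finset.sum_congr rfl fun i _ => hstep i]
        have h1 : (∑ i ∈ Finset.range (N+1),
              toRightTw R E ι.toRingHom (G i) ⊗ₜ[R] toLeftMod R E ι.toRingHom (x ^ i))
            = (∑ i ∈ Finset.range N,
              toRightTw R E ι.toRingHom (G (i+1)) ⊗ₜ[R] toLeftMod R E ι.toRingHom (x ^ (i+1)))
              + toRightTw R E ι.toRingHom (G 0) ⊗ₜ[R] toLeftMod R E ι.toRingHom (x ^ 0) :=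
          Finset.sum_range_succ' _ _
        have hG0' : toRightTw R E ι.toRingHom (G 0) ⊗ₜ[R] toLeftMod R E ι.toRingHom (x ^ 0) = 0 := by
          rw [hG]
          show toRightTw R E ι.toRingHom (F 0 * x - a 0) ⊗ₜ[R] toLeftMod R E ι.toRingHom (x ^ 0) = 0
          rw [hG0, show toRightTw R E ι.toRingHom (0:E) = 0 from rfl]
          exact TensorProduct.zero_tmul _ _
        have hGN : toRightTw R E ι.toRingHom (G N) ⊗ₜ[R] toLeftMod R E ι.toRingHom (x ^ N) = 0 := by
          rw [hG]
          show toRightTw R E ι.toRingHom (F N * x - a N) ⊗ₜ[R] toLeftMod R E ι.toRingHom (x ^ N) = 0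
          have hFN : F N = 0 := by
            rw [hF]
            show -(∑ j ∈ Finset.Ico (N+1) N, a j * x ^ (j - N - 1)) = 0
            rw [Finset.Ico_eq_empty (by omega), Finset.sum_empty, neg_zero]
          rw [hFN, zero_mul, h0 N (le_refl N), sub_zero,
            show toRightTw R E ι.toRingHom (0:E) = 0 from rfl]
          exact TensorProduct.zero_tmul _ _
        have h2 := Finset.sum_range_succ
          (fun i => toRightTw R E ι.toRingHom (G i) ⊗ₜ[R] toLeftMod R E ι.toRingHom (x ^ i)) N
        rw [h2, hGN, add_zero] at h1
        rw [hG0', add_zero] at h1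
        exact h1.symm
      rw [hB, ← Finset.sum_sub_distrib]
      rw [hrep]
      refine Finset.sum_congr rfl fun i _ => ?_
      rw [← TensorProduct.sub_tmul, toR_sub, hG]
      show toRightTw R E ι.toRingHom (F i * x - (F i * x - a i)) ⊗ₜ[R] toLeftMod R E ι.toRingHom (x ^ i) = _
      rw [sub_sub_cancel]
    · -- t ∈ range ρ → μ t = 0
      rintro ⟨s, rfl⟩
      induction s with
      | zero => rw [map_zero, map_zero]
      | tmul m n =>
        rw [hρ' m n, map_sub, hμ', hμ']
        simp only [ofRightTw_toRightTw, ofLeftMod_toLeftMod]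
        rw [mul_assoc, sub_self]
      | add s₁ s₂ ih₁ ih₂ =>
        rw [map_add, map_add, ih₁, ih₂, add_zero]
end
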